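/- Let d ≥ 2 and g ≥ 2 be integers, and let C be the complete admissible uniform clutter on the vertex set X = X^1 ∪ ⋯ ∪ X^d, where X^ℓ = {x_1^ℓ,…,x_g^ℓ}, with edges {x_{i_1}^1, x_{i_2}^2, …, x_{i_d}^d} for all 1 ≤ i_1 ≤ i_2 ≤ ⋯ ≤ i_d ≤ g. Then the edge ideal I(C) ⊆ K[X] is normally torsion free (I(C)^i = I(C)^(i) for all i ≥ 1) and normal (I(C)^i equals its integral closure for all i ≥ 1). -/

import Mathlib

open BigOperators MvPolynomial

/-- The edges of the complete admissible uniform clutter on the vertex set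
`X = X¹ ∪ ⋯ ∪ X^d`, `X^ℓ = {x₁^ℓ,…,x_g^ℓ}` (the vertex `x_k^ℓ` is encoded as
the pair `(ℓ, k) : Fin d × Fin g`): they are the sets
`{x_{i₁}^1, …, x_{i_d}^d}` with `i₁ ≤ i₂ ≤ ⋯ ≤ i_d`. -/
def CAUEdge (d g : ℕ) (s : Finset (Fin d × Fin g)) : Prop :=
  ∃ ι : Fin d → Fin g, Monotone ι ∧
    s = Finset.univ.image fun ℓ => (ℓ, ι ℓ)

/-- `C` is a minimal vertex cover of the complete admissible uniform clutter:
it meets every edge and no proper subset does. -/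
def CAUMinVertexCover (d g : ℕ) (C : Finset (Fin d × Fin g)) : Prop :=
  (∀ s : Finset (Fin d × Fin g), CAUEdge d g s → ∃ v ∈ C, v ∈ s) ∧
    ∀ C' : Finset (Fin d × Fin g), C' ⊆ C →
      (∀ s : Finset (Fin d × Fin g), CAUEdge d g s → ∃ v ∈ C', v ∈ s) →
      C' = C

/-- The monomial `x^a` in `K[X]`. -/
noncomputable def mono (K : Type*) [Field K] {d g : ℕ}
    (a : Fin d × Fin g → ℕ) : MvPolynomial (Fin d × Fin g) K :=
  MvPolynomial.monomial (Finsupp.equivFunOnFinite.symm a) (1 : K)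

namespace CAUaux

variable (a : ℕ → ℕ → ℕ)

/-- minimal weight of a staircase cut of levels `0..ℓ` with top threshold `i`. -/
def Lcut : ℕ → ℕ → ℕ
  | 0, i => ∑ j ∈ Finset.range i, a 0 j
  | (ℓ+1), i => Finset.inf' (Finset.range (i+1)) Finset.nonempty_range_add_one
      (fun t => Lcut ℓ t + ∑ j ∈ Finset.Ico t i, a (ℓ+1) j)

lemma Lcut_zero (ℓ : ℕ) : Lcut a ℓ 0 = 0 := by
  induction ℓ with
  | zero => simp [Lcut]
  | succ ℓ ih =>
      refine le_antisymm ?_ (Nat.zero_le _)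
      have h0 : (0:ℕ) ∈ Finset.range (0+1) := by simp
      calc Lcut a (ℓ+1) 0 ≤ Lcut a ℓ 0 + ∑ j ∈ Finset.Ico 0 0, a (ℓ+1) j :=
            Finset.inf'_le _ h0
        _ = 0 := by simp [ih]

lemma Lcut_mono (ℓ : ℕ) : Monotone (Lcut a ℓ) := by
  induction ℓ with
  | zero =>
      intro i j hij
      exact Finset.sum_le_sum_of_subset (Finset.range_subset_range.2 hij)
  | succ ℓ ih =>
      intro i j hij
      apply Finset.le_inf'
      intro t ht
      rw [Finset.mem_range, Nat.lt_succ_iff] at ht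
      by_cases hti : t ≤ i
      · calc Lcut a (ℓ+1) i ≤ Lcut a ℓ t + ∑ x ∈ Finset.Ico t i, a (ℓ+1) x :=
              Finset.inf'_le _ (by simp [Nat.lt_succ_iff, hti])
          _ ≤ Lcut a ℓ t + ∑ x ∈ Finset.Ico t j, a (ℓ+1) x := by
              gcongr
      · push_neg at hti
        calc Lcut a (ℓ+1) i ≤ Lcut a ℓ i + ∑ x ∈ Finset.Ico i i, a (ℓ+1) x :=
              Finset.inf'_le _ (by simp)
          _ = Lcut a ℓ i := by simp
          _ ≤ Lcut a ℓ t := ih hti.le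
          _ ≤ Lcut a ℓ t + ∑ x ∈ Finset.Ico t j, a (ℓ+1) x := Nat.le_add_right _ _

lemma Lcut_succ_le (ℓ i : ℕ) : Lcut a ℓ (i+1) ≤ Lcut a ℓ i + a ℓ i := by
  induction ℓ with
  | zero => simp [Lcut, Finset.sum_range_succ]
  | succ ℓ _ =>
      obtain ⟨t, ht, hte⟩ := Finset.exists_mem_eq_inf' (Finset.nonempty_range_add_one (n := i))
        (fun t => Lcut a ℓ t + ∑ j ∈ Finset.Ico t i, a (ℓ+1) j)
      rw [Finset.mem_range, Nat.lt_succ_iff] at ht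
      have h1 : Lcut a (ℓ+1) (i+1) ≤ Lcut a ℓ t + ∑ j ∈ Finset.Ico t (i+1), a (ℓ+1) j :=
        by rw [Lcut]; exact Finset.inf'_le (b := t) _ (Finset.mem_range.2 (by omega))
      rw [Finset.sum_Ico_succ_top ht] at h1
      calc Lcut a (ℓ+1) (i+1) ≤ (Lcut a ℓ t + ∑ j ∈ Finset.Ico t i, a (ℓ+1) j) + a (ℓ+1) i := by
            omega
        _ = Lcut a (ℓ+1) i + a (ℓ+1) i := by rw [Lcut, ← hte]

lemma Lcut_level_le (ℓ i : ℕ) : Lcut a (ℓ+1) i ≤ Lcut a ℓ i := by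
  calc Lcut a (ℓ+1) i ≤ Lcut a ℓ i + ∑ j ∈ Finset.Ico i i, a (ℓ+1) j :=
        Finset.inf'_le _ (by simp)
    _ = Lcut a ℓ i := by simp

/-- the min in `Lcut` is attained by an actual staircase. -/
lemma Lcut_attained (ℓ i : ℕ) : ∃ t : ℕ → ℕ, Monotone t ∧ t 0 = 0 ∧
    (∀ m, ℓ + 1 ≤ m → t m = i) ∧
    Lcut a ℓ i = ∑ m ∈ Finset.range (ℓ+1), ∑ j ∈ Finset.Ico (t m) (t (m+1)), a m j := by
  induction ℓ generalizing i with
  | zero =>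
      refine ⟨fun m => if m = 0 then 0 else i, ?_, by simp, ?_, ?_⟩
      · intro x y hxy
        dsimp only
        split_ifs <;> omega
      · intro m hm
        simp only [if_neg (by omega : ¬ m = 0)]
      · simp only [Lcut]
        rw [Finset.sum_range_one]
        norm_num [← Finset.range_eq_Ico]
  | succ ℓ ih =>
      obtain ⟨t0, ht0, hte⟩ := Finset.exists_mem_eq_inf' (Finset.nonempty_range_add_one (n := i))
        (fun t => Lcut a ℓ t + ∑ j ∈ Finset.Ico t i, a (ℓ+1) j)
      rw [Finset.mem_range, Nat.lt_succ_iff] at ht0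
      obtain ⟨t, htm, ht00, htc, hsum⟩ := ih t0
      refine ⟨fun m => if m ≤ ℓ + 1 then t m else i, ?_, by simp [ht00], ?_, ?_⟩
      · intro x y hxy
        by_cases hx : x ≤ ℓ+1 <;> by_cases hy : y ≤ ℓ+1
        · simpa [hx, hy] using htm hxy
        · simp only [if_pos hx, if_neg hy]
          calc t x ≤ t (ℓ+1) := htm hx
            _ = t0 := htc _ le_rfl
            _ ≤ i := ht0
        · omega
        · simp [hx, hy]
      · intro m hm
        simp only [if_neg (by omega : ¬ m ≤ ℓ+1)]
      · rw [Finset.sum_range_succ]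
        have heq : ∀ m ∈ Finset.range (ℓ+1),
            (∑ j ∈ Finset.Ico ((fun m => if m ≤ ℓ + 1 then t m else i) m)
              ((fun m => if m ≤ ℓ + 1 then t m else i) (m+1)), a m j)
            = ∑ j ∈ Finset.Ico (t m) (t (m+1)), a m j := by
          intro m hm
          rw [Finset.mem_range] at hm
          simp only [if_pos (by omega : m ≤ ℓ+1), if_pos (by omega : m+1 ≤ ℓ+1)]
        rw [Finset.sum_congr rfl heq, ← hsum]
        simp only [if_pos (le_refl (ℓ+1)), if_neg (by omega : ¬ ℓ+1+1 ≤ ℓ+1)]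
        rw [htc (ℓ+1) le_rfl, Lcut, ← hte]


lemma Lcut_anti (i : ℕ) : ∀ {ℓ ℓ' : ℕ}, ℓ ≤ ℓ' → Lcut a ℓ' i ≤ Lcut a ℓ i := by
  intro ℓ ℓ' h
  induction h with
  | refl => exact le_rfl
  | step h ih => exact le_trans (Lcut_level_le a _ _) ih

/-- Main combinatorial extraction: if the minimal staircase cut is at least `k`,
there are `k` monotone paths respecting the vertex capacities `a`. -/
lemma exists_paths (d g k : ℕ) (hg : 1 ≤ g)
    (hk : k ≤ Lcut a (d-1) g) :
    ∃ ι : ℕ → ℕ → ℕ, (∀ m, m < k → Monotone (ι m)) ∧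
      (∀ m ℓ, m < k → ι m ℓ < g) ∧
      (∀ ℓ i, ℓ < d →
        ((Finset.range k).filter (fun m => ι m ℓ = i)).card ≤ a ℓ i) := by
  classical
  set P : ℕ → ℕ → ℕ := fun ℓ i => min k (Lcut a ℓ i) with hP
  have hPtop : ∀ ℓ, ℓ ≤ d - 1 → P ℓ g = k := by
    intro ℓ hℓ
    have := le_trans hk (Lcut_anti a g hℓ)
    simp only [hP]
    omega
  have hex : ∀ m ℓ, m < k → ℓ ≤ d - 1 → ∃ i, m < P ℓ (i+1) := by
    intro m ℓ hm hℓ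
    refine ⟨g - 1, ?_⟩
    rw [show g - 1 + 1 = g by omega, hPtop ℓ hℓ]
    exact hm
  set F : ℕ → ℕ → ℕ := fun m ℓ => if h : ∃ i, m < P ℓ (i+1) then Nat.find h else 0 with hF
  have hFdef : ∀ m ℓ (h : ∃ i, m < P ℓ (i+1)), F m ℓ = Nat.find h := by
    intro m ℓ h; simp only [hF, dif_pos h]
  have hPmono : ∀ ℓ, Monotone (P ℓ) := by
    intro ℓ i j hij
    exact min_le_min le_rfl (Lcut_mono a ℓ hij)
  have hPanti : ∀ {ℓ ℓ'} , ℓ ≤ ℓ' → ∀ i, P ℓ' i ≤ P ℓ i := by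
    intro ℓ ℓ' h i
    exact min_le_min le_rfl (Lcut_anti a i h)
  -- characterization
  have hchar : ∀ m ℓ, m < k → ℓ ≤ d - 1 →
      (m < P ℓ (F m ℓ + 1) ∧ P ℓ (F m ℓ) ≤ m) := by
    intro m ℓ hm hℓ
    have h := hex m ℓ hm hℓ
    rw [hFdef m ℓ h]
    refine ⟨Nat.find_spec h, ?_⟩
    rcases Nat.eq_zero_or_pos (Nat.find h) with h0 | hpos
    · rw [h0]
      simp only [hP]
      rw [Lcut_zero]
      omega
    · obtain ⟨j, hj⟩ : ∃ j, Nat.find h = j + 1 := ⟨Nat.find h - 1, by omega⟩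
      have := Nat.find_min h (show j < Nat.find h by omega)
      rw [hj]
      omega
  have hFlt : ∀ m ℓ, m < k → ℓ ≤ d - 1 → F m ℓ < g := by
    intro m ℓ hm hℓ
    have h := hex m ℓ hm hℓ
    rw [hFdef m ℓ h]
    have : Nat.find h ≤ g - 1 := Nat.find_min' h (by
      rw [show g - 1 + 1 = g by omega, hPtop ℓ hℓ]; exact hm)
    omega
  have hFmono : ∀ m {ℓ ℓ'}, m < k → ℓ ≤ ℓ' → ℓ' ≤ d - 1 → F m ℓ ≤ F m ℓ' := by
    intro m ℓ ℓ' hm hℓℓ hℓ'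
    have h := hex m ℓ hm (le_trans hℓℓ hℓ')
    have h' := hex m ℓ' hm hℓ'
    rw [hFdef m ℓ h, hFdef m ℓ' h']
    exact Nat.find_min' h (lt_of_lt_of_le (Nat.find_spec h') (hPanti hℓℓ _))
  refine ⟨fun m ℓ => F m (min ℓ (d-1)), ?_, ?_, ?_⟩
  · intro m hm x y hxy
    exact hFmono m hm (by omega) (by omega)
  · intro m ℓ hm
    exact hFlt m _ hm (by omega)
  · intro ℓ i hℓ
    have hℓ' : min ℓ (d-1) = ℓ := by omega
    have hsub : ((Finset.range k).filter (fun m => F m (min ℓ (d-1)) = i)) ⊆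
        Finset.Ico (P ℓ i) (P ℓ (i+1)) := by
      intro m hmem
      rw [Finset.mem_filter, Finset.mem_range] at hmem
      obtain ⟨hm, hfi⟩ := hmem
      rw [hℓ'] at hfi
      obtain ⟨h1, h2⟩ := hchar m ℓ hm (by omega)
      rw [hfi] at h1 h2
      rw [Finset.mem_Ico]
      exact ⟨h2, h1⟩
    calc ((Finset.range k).filter (fun m => F m (min ℓ (d-1)) = i)).card
        ≤ (Finset.Ico (P ℓ i) (P ℓ (i+1))).card := Finset.card_le_card hsub
      _ = P ℓ (i+1) - P ℓ i := Nat.card_Ico _ _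
      _ ≤ a ℓ i := by
          have := Lcut_succ_le a ℓ i
          simp only [hP]
          omega

section FinWorld

variable {d g : ℕ}

/-- exponent vector of the edge monomial attached to a monotone `ι`. -/
noncomputable def edgeExp (ι : Fin d → Fin g) : (Fin d × Fin g) →₀ ℕ :=
  ∑ ℓ : Fin d, Finsupp.single (ℓ, ι ℓ) 1

lemma edgeExp_apply (ι : Fin d → Fin g) (v : Fin d × Fin g) :
    edgeExp ι v = if ι v.1 = v.2 then 1 else 0 := by
  classical
  rw [edgeExp, Finsupp.finset_sum_apply]
  rw [Finset.sum_eq_single v.1]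
  · simp only [Finsupp.single_apply]
    by_cases h : ι v.1 = v.2
    · rw [if_pos (by rw [h]), if_pos h]
    · rw [if_neg (by simp [Prod.ext_iff, h]), if_neg h]
  · intro ℓ _ hℓ
    rw [Finsupp.single_apply, if_neg (by simp [Prod.ext_iff, hℓ])]
  · intro h
    exact absurd (Finset.mem_univ _) h

/-- view an exponent vector as a capacity function on `ℕ × ℕ`. -/
def toFun2 (m : (Fin d × Fin g) →₀ ℕ) : ℕ → ℕ → ℕ := fun ℓ i =>
  if h : ℓ < d ∧ i < g then m (⟨ℓ, h.1⟩, ⟨i, h.2⟩) else 0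

lemma toFun2_apply (m : (Fin d × Fin g) →₀ ℕ) (v : Fin d × Fin g) :
    toFun2 m ↑v.1 ↑v.2 = m v := by
  rw [toFun2, dif_pos ⟨v.1.2, v.2.2⟩]

/-- main combinatorial lemma, `Fin` version. -/
lemma core (hd : 1 ≤ d) (hg : 1 ≤ g) (k : ℕ) (m : (Fin d × Fin g) →₀ ℕ)
    (hcut : ∀ t : ℕ → ℕ, Monotone t → t 0 = 0 → t d = g →
      k ≤ ∑ ℓ ∈ Finset.range d, ∑ j ∈ Finset.Ico (t ℓ) (t (ℓ+1)), toFun2 m ℓ j) :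
    ∃ f : Fin k → (Fin d → Fin g), (∀ j, Monotone (f j)) ∧ ∑ j, edgeExp (f j) ≤ m := by
  classical
  have hk : k ≤ Lcut (toFun2 m) (d-1) g := by
    obtain ⟨t, htm, ht0, htc, hsum⟩ := Lcut_attained (toFun2 m) (d-1) g
    rw [hsum, show d - 1 + 1 = d by omega]
    exact hcut t htm ht0 (htc d (by omega))
  obtain ⟨ι, hmono, hlt, hcard⟩ := exists_paths (toFun2 m) d g k hg hk
  refine ⟨fun j ℓ => ⟨ι ↑j ↑ℓ, hlt ↑j ↑ℓ j.2⟩, ?_, ?_⟩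
  · intro j ℓ ℓ' hll
    exact hmono ↑j j.2 (show (↑ℓ:ℕ) ≤ ↑ℓ' from hll)
  · rw [Finsupp.le_def]
    intro v
    rw [Finsupp.finset_sum_apply]
    have h1 : ∀ j : Fin k, edgeExp (fun ℓ : Fin d => (⟨ι ↑j ↑ℓ, hlt ↑j ↑ℓ j.2⟩ : Fin g)) v
        = if ι ↑j ↑v.1 = ↑v.2 then 1 else 0 := by
      intro j
      rw [edgeExp_apply]
      congr 1
      rw [Fin.ext_iff]
    rw [Finset.sum_congr rfl (fun j _ => h1 j)]
    rw [Fin.sum_univ_eq_sum_range (fun n => if ι n ↑v.1 = ↑v.2 then 1 else 0) k]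
    rw [← Finset.card_filter]
    calc ((Finset.range k).filter (fun n => ι n ↑v.1 = ↑v.2)).card
        ≤ toFun2 m ↑v.1 ↑v.2 := hcard ↑v.1 ↑v.2 v.1.2
      _ = m v := toFun2_apply m v

end FinWorld


section Stair

variable {d g : ℕ}

/-- the staircase vertex cover attached to a monotone threshold sequence `t`. -/
def stairCover (d g : ℕ) (t : ℕ → ℕ) : Finset (Fin d × Fin g) :=
  Finset.univ.filter fun v => t ↑v.1 ≤ ↑v.2 ∧ (↑v.2 : ℕ) < t (↑v.1 + 1)

lemma stair_mem_edge (hd : 1 ≤ d) {t : ℕ → ℕ} (ht : Monotone t) (ht0 : t 0 = 0)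
    (htd : t d = g) (ι : Fin d → Fin g) (hι : Monotone ι) :
    ∃ ℓ : Fin d, (ℓ, ι ℓ) ∈ stairCover d g t := by
  classical
  set u : ℕ → ℕ := fun n => if h : n < d then (ι ⟨n, h⟩ : ℕ) else g with hu
  have humono : Monotone u := by
    intro x y hxy
    simp only [hu]
    split_ifs with hx hy hy
    · exact hι (show (⟨x, hx⟩ : Fin d) ≤ ⟨y, hy⟩ from hxy)
    · exact le_of_lt (Fin.is_lt _)
    · omega
    · exact le_rfl
  have hexx : ∃ n, u n < t (n + 1) := by
    refine ⟨d - 1, ?_⟩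
    rw [show d - 1 + 1 = d by omega, htd]
    simp only [hu, dif_pos (show d - 1 < d by omega)]
    exact Fin.is_lt _
  have hn₀d : Nat.find hexx < d := by
    have : Nat.find hexx ≤ d - 1 := Nat.find_min' hexx (by
      rw [show d - 1 + 1 = d by omega, htd]
      simp only [hu, dif_pos (show d - 1 < d by omega)]
      exact Fin.is_lt _)
    omega
  have hspec := Nat.find_spec hexx
  have hlow : t (Nat.find hexx) ≤ u (Nat.find hexx) := by
    rcases Nat.eq_zero_or_pos (Nat.find hexx) with h0 | hpos
    · rw [h0, ht0]; exact Nat.zero_le _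
    · obtain ⟨n, hn⟩ : ∃ n, Nat.find hexx = n + 1 := ⟨Nat.find hexx - 1, by omega⟩
      have hmin := Nat.find_min hexx (show n < Nat.find hexx by omega)
      push_neg at hmin
      rw [hn]
      exact le_trans hmin (humono (Nat.le_succ n))
  refine ⟨⟨Nat.find hexx, hn₀d⟩, ?_⟩
  rw [stairCover, Finset.mem_filter]
  refine ⟨Finset.mem_univ _, ?_, ?_⟩
  · simpa only [hu, dif_pos hn₀d] using hlow
  · simpa only [hu, dif_pos hn₀d] using hspec

lemma stair_minCover (hd : 1 ≤ d) {t : ℕ → ℕ} (ht : Monotone t) (ht0 : t 0 = 0)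
    (htd : t d = g) : CAUMinVertexCover d g (stairCover d g t) := by
  constructor
  · rintro s ⟨ι, hι, rfl⟩
    obtain ⟨ℓ, hℓ⟩ := stair_mem_edge hd ht ht0 htd ι hι
    exact ⟨(ℓ, ι ℓ), hℓ, Finset.mem_image_of_mem _ (Finset.mem_univ ℓ)⟩
  · intro C' hsub hcov
    refine Finset.Subset.antisymm hsub ?_
    intro v hv
    rw [stairCover, Finset.mem_filter] at hv
    obtain ⟨-, h1, h2⟩ := hv
    obtain ⟨w, hwC', hws⟩ := hcov (Finset.univ.image fun ℓ : Fin d => (ℓ, v.2))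
      ⟨fun _ => v.2, monotone_const, rfl⟩
    rw [Finset.mem_image] at hws
    obtain ⟨ℓ, -, hw⟩ := hws
    have hwC := hsub hwC'
    rw [stairCover, Finset.mem_filter, ← hw] at hwC
    obtain ⟨-, h1', h2'⟩ := hwC
    dsimp only at h1' h2'
    have hll : (↑ℓ : ℕ) = ↑v.1 := by
      rcases lt_trichotomy (↑ℓ : ℕ) (↑v.1 : ℕ) with h | h | h
      · have := ht (show (↑ℓ : ℕ) + 1 ≤ ↑v.1 from h)
        omega
      · exact h
      · have := ht (show (↑v.1 : ℕ) + 1 ≤ ↑ℓ from h)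
        omega
    have : w = v := by
      rw [← hw]
      exact Prod.ext (Fin.ext hll) rfl
    rw [← this]
    exact hwC'

lemma sum_stair (w : (Fin d × Fin g) →₀ ℕ) {t : ℕ → ℕ} (ht : Monotone t)
    (htd : t d = g) :
    ∑ v ∈ stairCover d g t, w v
      = ∑ ℓ ∈ Finset.range d, ∑ j ∈ Finset.Ico (t ℓ) (t (ℓ+1)), toFun2 w ℓ j := by
  classical
  rw [stairCover, Finset.sum_filter, Fintype.sum_prod_type]
  have hinner : ∀ ℓ : Fin d,
      (∑ i : Fin g, if t ↑ℓ ≤ ↑i ∧ (↑i : ℕ) < t (↑ℓ + 1) then w (ℓ, i) else 0)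
        = ∑ j ∈ Finset.Ico (t ↑ℓ) (t (↑ℓ + 1)), toFun2 w ↑ℓ j := by
    intro ℓ
    have step1 : (∑ i : Fin g, if t ↑ℓ ≤ ↑i ∧ (↑i : ℕ) < t (↑ℓ + 1) then w (ℓ, i) else 0)
        = ∑ i : Fin g, (fun n => if t ↑ℓ ≤ n ∧ n < t (↑ℓ + 1) then toFun2 w ↑ℓ n else 0) ↑i := by
      refine Finset.sum_congr rfl fun i _ => ?_
      simp only []
      congr 1
      rw [toFun2, dif_pos ⟨ℓ.2, i.2⟩]
    rw [step1, Fin.sum_univ_eq_sum_range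
      (fun n => if t ↑ℓ ≤ n ∧ n < t (↑ℓ + 1) then toFun2 w ↑ℓ n else 0) g, ← Finset.sum_filter]
    congr 1
    have htlg : t (↑ℓ + 1) ≤ g := by
      rw [← htd]; exact ht (by omega : (↑ℓ : ℕ) + 1 ≤ d)
    ext j
    simp only [Finset.mem_filter, Finset.mem_range, Finset.mem_Ico]
    omega
  rw [Finset.sum_congr rfl fun ℓ _ => hinner ℓ]
  exact Fin.sum_univ_eq_sum_range (fun ℓ => ∑ j ∈ Finset.Ico (t ℓ) (t (ℓ+1)), toFun2 w ℓ j) d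

end Stair



section Algebra

open MvPolynomial

variable (K : Type*) [Field K] {d g : ℕ}

lemma prod_X_eq_monomial (ι : Fin d → Fin g) :
    (∏ ℓ : Fin d, (X (ℓ, ι ℓ) : MvPolynomial (Fin d × Fin g) K))
      = monomial (edgeExp ι) 1 := by
  rw [edgeExp]
  induction (Finset.univ : Finset (Fin d)) using Finset.cons_induction with
  | empty => simp
  | cons ℓ s hs ih =>
      rw [Finset.prod_cons, Finset.sum_cons, ih, X, monomial_mul, one_mul]

/-- sums of `k` elements of `A`. -/
def kSum (A : Set ((Fin d × Fin g) →₀ ℕ)) (k : ℕ) : Set ((Fin d × Fin g) →₀ ℕ) :=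
  {s | ∃ f : Fin k → ((Fin d × Fin g) →₀ ℕ), (∀ j, f j ∈ A) ∧ s = ∑ j, f j}

lemma span_monomial_pow (A : Set ((Fin d × Fin g) →₀ ℕ)) (k : ℕ) :
    (Ideal.span ((fun s => (monomial s (1 : K) : MvPolynomial (Fin d × Fin g) K)) '' A)) ^ k
      = Ideal.span ((fun s => (monomial s (1 : K) : MvPolynomial (Fin d × Fin g) K)) ''
          kSum A k) := by
  induction k with
  | zero =>
      rw [pow_zero]
      have h0 : kSum A 0 = {0} := by
        ext s
        constructor
        · rintro ⟨f, -, rfl⟩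
          simp
        · rintro rfl
          exact ⟨fun j => j.elim0, fun j => j.elim0, by simp⟩
      rw [h0, Set.image_singleton, monomial_zero', MvPolynomial.C_1, Ideal.span_singleton_one,
        Ideal.one_eq_top]
  | succ k ih =>
      rw [pow_succ, ih, Ideal.span_mul_span']
      congr 1
      ext x
      rw [Set.mem_mul]
      constructor
      · rintro ⟨y, ⟨sy, ⟨f, hf, rfl⟩, rfl⟩, z, ⟨sz, hsz, rfl⟩, rfl⟩
        refine ⟨(∑ j, f j) + sz, ⟨Fin.snoc f sz, ?_, ?_⟩, ?_⟩
        · intro j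
          rcases Fin.eq_castSucc_or_eq_last j with ⟨j', rfl⟩ | rfl
          · rw [Fin.snoc_castSucc]; exact hf j'
          · rw [Fin.snoc_last]; exact hsz
        · rw [Fin.sum_univ_castSucc]
          simp only [Fin.snoc_castSucc, Fin.snoc_last]
        · rw [monomial_mul, one_mul]
      · rintro ⟨s, ⟨f, hf, rfl⟩, rfl⟩
        refine ⟨monomial (∑ j : Fin k, f j.castSucc) 1,
          ⟨∑ j : Fin k, f j.castSucc, ⟨fun j => f j.castSucc, fun j => hf _, rfl⟩, rfl⟩,
          monomial (f (Fin.last k)) 1, ⟨f (Fin.last k), hf _, rfl⟩, ?_⟩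
        rw [monomial_mul, one_mul, ← Fin.sum_univ_castSucc]

lemma X_image_eq (C : Finset (Fin d × Fin g)) :
    (fun v => (X v : MvPolynomial (Fin d × Fin g) K)) '' ↑C
      = (fun s => (monomial s (1 : K) : MvPolynomial (Fin d × Fin g) K)) ''
          ((fun v => Finsupp.single v 1) '' ↑C) := by
  rw [Set.image_image]
  rfl

lemma single_le_edgeExp (ι : Fin d → Fin g) (ℓ : Fin d) :
    Finsupp.single (ℓ, ι ℓ) 1 ≤ edgeExp ι := by
  rw [Finsupp.le_def]
  intro v
  rw [Finsupp.single_apply, edgeExp_apply]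
  by_cases h : (ℓ, ι ℓ) = v
  · rw [if_pos h, if_pos (by rw [← h])]
  · rw [if_neg h]
    exact Nat.zero_le _

end Algebra

end CAUaux

/-- for integers `d ≥ 2`, `g ≥ 2`, the edge ideal `I(C)` of the
complete admissible uniform clutter `C` is normally torsion free (`I(C)^k`
equals the `k`-th symbolic power, the intersection of the `k`-th powers of
the ideals generated by the minimal vertex covers, for all `k ≥ 1`) and
normal (`I(C)^k` equals its integral closure for all `k ≥ 1`). -/
theorem edge_ideal_complete_admissible_uniform_clutter_ntf_and_normal
    (K : Type*) [Field K] (d g : ℕ) (hd : 2 ≤ d) (hg : 2 ≤ g)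
    (I : Ideal (MvPolynomial (Fin d × Fin g) K))
    (hI : I = Ideal.span {f | ∃ ι : Fin d → Fin g, Monotone ι ∧
      f = ∏ ℓ : Fin d, (X (ℓ, ι ℓ) : MvPolynomial (Fin d × Fin g) K)}) :
    (∀ k : ℕ, 1 ≤ k →
      I ^ k = ⨅ (C : Finset (Fin d × Fin g)) (_ : CAUMinVertexCover d g C),
        (Ideal.span
          ((fun v => (X v : MvPolynomial (Fin d × Fin g) K)) '' ↑C)) ^ k) ∧
    (∀ k : ℕ, 1 ≤ k →
      I ^ k = Ideal.span {f | ∃ a : Fin d × Fin g → ℕ, f = mono K a ∧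
        ∃ p : ℕ, 0 < p ∧ mono K a ^ p ∈ I ^ (p * k)}) := by
  classical
  have hd1 : 1 ≤ d := by omega
  have hg1 : 1 ≤ g := by omega
  set Eset : Set ((Fin d × Fin g) →₀ ℕ) :=
    {s | ∃ ι : Fin d → Fin g, Monotone ι ∧ s = CAUaux.edgeExp ι} with hEset
  have hIe : I = Ideal.span
      ((fun s => (monomial s (1:K) : MvPolynomial (Fin d × Fin g) K)) '' Eset) := by
    rw [hI]
    congr 1
    ext f
    constructor
    · rintro ⟨ι, hι, rfl⟩
      exact ⟨CAUaux.edgeExp ι, ⟨ι, hι, rfl⟩, (CAUaux.prod_X_eq_monomial K ι).symm⟩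
    · rintro ⟨s, ⟨ι, hι, rfl⟩, rfl⟩
      exact ⟨ι, hι, (CAUaux.prod_X_eq_monomial K ι).symm⟩
  have hIk : ∀ k : ℕ, I ^ k = Ideal.span
      ((fun s => (monomial s (1:K) : MvPolynomial (Fin d × Fin g) K)) ''
        CAUaux.kSum Eset k) := by
    intro k
    rw [hIe, CAUaux.span_monomial_pow]
  have hB : ∀ (C : Finset (Fin d × Fin g)) (k : ℕ) u,
      u ∈ CAUaux.kSum ((fun v => Finsupp.single v 1) '' (↑C : Set (Fin d × Fin g))) k →
      ∑ v ∈ C, u v = k := by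
    rintro C k u ⟨f, hf, rfl⟩
    have hone : ∀ j : Fin k, ∑ v ∈ C, f j v = 1 := by
      intro j
      obtain ⟨w, hwC, hw⟩ := hf j
      rw [← hw]
      simp only [Finsupp.single_apply]
      rw [Finset.sum_ite_eq, if_pos (Finset.mem_coe.1 hwC)]
    calc ∑ v ∈ C, (∑ j, f j) v = ∑ v ∈ C, ∑ j, f j v := by
          refine Finset.sum_congr rfl fun v _ => ?_
          rw [Finsupp.finset_sum_apply]
      _ = ∑ j, ∑ v ∈ C, f j v := Finset.sum_comm
      _ = k := by
          rw [Finset.sum_congr rfl fun j _ => hone j]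
          simp
  have hD : ∀ (t : ℕ → ℕ), Monotone t → t 0 = 0 → t d = g → ∀ (N : ℕ) u,
      u ∈ CAUaux.kSum Eset N →
      N ≤ ∑ v ∈ CAUaux.stairCover d g t, u v := by
    rintro t htm ht0 htd N u ⟨f, hf, rfl⟩
    choose ι hι hfe using hf
    have h1 : ∀ j, 1 ≤ ∑ v ∈ CAUaux.stairCover d g t, f j v := by
      intro j
      obtain ⟨ℓ₀, hℓ₀⟩ := CAUaux.stair_mem_edge hd1 htm ht0 htd (ι j) (hι j)
      have h2 : f j (ℓ₀, ι j ℓ₀) = 1 := by rw [hfe j, CAUaux.edgeExp_apply, if_pos rfl]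
      calc (1:ℕ) = f j (ℓ₀, ι j ℓ₀) := h2.symm
        _ ≤ ∑ v ∈ CAUaux.stairCover d g t, f j v :=
            Finset.single_le_sum (fun v _ => Nat.zero_le _) hℓ₀
    calc N = ∑ _j : Fin N, 1 := by simp
      _ ≤ ∑ j, ∑ v ∈ CAUaux.stairCover d g t, f j v := Finset.sum_le_sum fun j _ => h1 j
      _ = ∑ v ∈ CAUaux.stairCover d g t, ∑ j, f j v := Finset.sum_comm
      _ = ∑ v ∈ CAUaux.stairCover d g t, (∑ j, f j) v := by
          refine Finset.sum_congr rfl fun v _ => (Finsupp.finset_sum_apply _ _ _).symm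
  have hCore : ∀ (k : ℕ) (m : (Fin d × Fin g) →₀ ℕ),
      (∀ t : ℕ → ℕ, Monotone t → t 0 = 0 → t d = g →
        k ≤ ∑ v ∈ CAUaux.stairCover d g t, m v) →
      ∃ s ∈ CAUaux.kSum Eset k, s ≤ m := by
    intro k m hm
    obtain ⟨f, hmon, hle⟩ := CAUaux.core hd1 hg1 k m (fun t htm ht0 htd => by
      rw [← CAUaux.sum_stair m htm htd]
      exact hm t htm ht0 htd)
    exact ⟨∑ j, CAUaux.edgeExp (f j),
      ⟨fun j => CAUaux.edgeExp (f j), fun j => ⟨f j, hmon j, rfl⟩, rfl⟩, hle⟩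
  have hPC : ∀ (C : Finset (Fin d × Fin g)) (k : ℕ),
      (Ideal.span ((fun v => (X v : MvPolynomial (Fin d × Fin g) K)) '' ↑C)) ^ k
        = Ideal.span
          ((fun s => (monomial s (1:K) : MvPolynomial (Fin d × Fin g) K)) ''
            CAUaux.kSum ((fun v => Finsupp.single v 1) '' (↑C : Set (Fin d × Fin g))) k) := by
    intro C k
    rw [CAUaux.X_image_eq, CAUaux.span_monomial_pow]
  refine ⟨?_, ?_⟩
  · intro k hk
    apply le_antisymm
    · refine le_iInf fun C => le_iInf fun hC => ?_
      rw [hIk k, hPC C k]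
      refine Ideal.span_le.2 ?_
      rintro x ⟨s, ⟨f, hf, rfl⟩, rfl⟩
      rw [SetLike.mem_coe, mem_ideal_span_monomial_image]
      intro xi hxi
      rw [support_monomial, if_neg one_ne_zero, Finset.mem_singleton] at hxi
      subst hxi
      choose ι hι hfe using hf
      have hsel : ∀ j : Fin k, ∃ ℓ : Fin d, (ℓ, ι j ℓ) ∈ C := by
        intro j
        obtain ⟨v, hvC, hvs⟩ := hC.1 _ ⟨ι j, hι j, rfl⟩
        rw [Finset.mem_image] at hvs
        obtain ⟨ℓ, -, hl⟩ := hvs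
        exact ⟨ℓ, by rw [hl]; exact hvC⟩
      choose ℓsel hℓsel using hsel
      refine ⟨∑ j, Finsupp.single (ℓsel j, ι j (ℓsel j)) 1,
        ⟨fun j => Finsupp.single (ℓsel j, ι j (ℓsel j)) 1,
         fun j => Set.mem_image_of_mem _ (hℓsel j), rfl⟩, ?_⟩
      calc ∑ j, Finsupp.single (ℓsel j, ι j (ℓsel j)) 1 ≤ ∑ j, CAUaux.edgeExp (ι j) :=
            Finset.sum_le_sum fun j _ => CAUaux.single_le_edgeExp (ι j) (ℓsel j)
        _ = ∑ j, f j := by rw [Finset.sum_congr rfl fun j _ => (hfe j).symm]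
    · intro p hp
      rw [hIk k, mem_ideal_span_monomial_image]
      intro m hm
      have hstair : ∀ t : ℕ → ℕ, Monotone t → t 0 = 0 → t d = g →
          k ≤ ∑ v ∈ CAUaux.stairCover d g t, m v := by
        intro t htm ht0 htd
        have hC := CAUaux.stair_minCover hd1 htm ht0 htd
        have hp1 : p ∈ (Ideal.span
            ((fun v => (X v : MvPolynomial (Fin d × Fin g) K)) ''
              ↑(CAUaux.stairCover d g t))) ^ k := by
          have h2 := (Submodule.mem_iInf _).1 hp (CAUaux.stairCover d g t)
          exact (Submodule.mem_iInf _).1 h2 hC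
        rw [hPC, mem_ideal_span_monomial_image] at hp1
        obtain ⟨u, hu, hule⟩ := hp1 m hm
        calc k = ∑ v ∈ CAUaux.stairCover d g t, u v := (hB _ _ _ hu).symm
          _ ≤ ∑ v ∈ CAUaux.stairCover d g t, m v :=
              Finset.sum_le_sum fun v _ => (Finsupp.le_def.1 hule) v
      obtain ⟨s, hsE, hsle⟩ := hCore k m hstair
      exact ⟨s, hsE, hsle⟩
  · intro k hk
    apply le_antisymm
    · rw [hIk k]
      refine Ideal.span_le.2 ?_
      rintro x ⟨s, hs, rfl⟩
      refine Ideal.subset_span ⟨⇑s, ?_, 1, one_pos, ?_⟩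
      · rw [mono, Finsupp.equivFunOnFinite_symm_coe]
      · rw [mono, Finsupp.equivFunOnFinite_symm_coe, pow_one, one_mul, hIk k]
        exact Ideal.subset_span ⟨s, hs, rfl⟩
    · refine Ideal.span_le.2 ?_
      rintro x ⟨a, rfl, p, hp, hpow⟩
      set sa := Finsupp.equivFunOnFinite.symm a with hsa
      have hmono1 : mono K a = monomial sa 1 := rfl
      have hmonop : mono K a ^ p = monomial (p • sa) 1 := by
        rw [hmono1, monomial_pow, one_pow]
      rw [hmonop, hIk (p * k), mem_ideal_span_monomial_image] at hpow
      have hsupp : p • sa ∈ (monomial (p • sa) (1:K)).support := by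
        rw [support_monomial, if_neg one_ne_zero]
        exact Finset.mem_singleton_self _
      obtain ⟨u, huE, hule⟩ := hpow _ hsupp
      have hstair : ∀ t : ℕ → ℕ, Monotone t → t 0 = 0 → t d = g →
          k ≤ ∑ v ∈ CAUaux.stairCover d g t, sa v := by
        intro t htm ht0 htd
        have h1 : p * k ≤ ∑ v ∈ CAUaux.stairCover d g t, u v := hD t htm ht0 htd _ u huE
        have h2 : ∑ v ∈ CAUaux.stairCover d g t, u v
            ≤ ∑ v ∈ CAUaux.stairCover d g t, (p • sa) v :=
          Finset.sum_le_sum fun v _ => (Finsupp.le_def.1 hule) v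
        have h3 : ∑ v ∈ CAUaux.stairCover d g t, (p • sa) v
            = p * ∑ v ∈ CAUaux.stairCover d g t, sa v := by
          rw [Finset.mul_sum]
          refine Finset.sum_congr rfl fun v _ => ?_
          rw [Finsupp.smul_apply, smul_eq_mul]
        have h4 : p * k ≤ p * ∑ v ∈ CAUaux.stairCover d g t, sa v := by omega
        exact Nat.le_of_mul_le_mul_left h4 hp
      obtain ⟨s, hsE, hsle⟩ := hCore k sa hstair
      rw [SetLike.mem_coe, hmono1, hIk k, mem_ideal_span_monomial_image]
      intro xi hxi
      rw [support_monomial, if_neg one_ne_zero, Finset.mem_singleton] at hxi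
      subst hxi
      exact ⟨s, hsE, hsle⟩
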